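/- Let K be a complex Hilbert space and let (N₁, N₂, N₃) be pairwise commuting normal bounded operators on K with N₃ unitary, N₂ = N₂*N₃, ‖N₂‖ ≤ 2, and N₁*N₁ = I − (1/4)N₂*N₂. Let H ⊆ K be a closed subspace invariant under N₁, N₂ and N₃, and set Vᵢ = Nᵢ|_H ∈ B(H). Then (V₂, V₃) is a Γ-isometry, i.e. V₂V₃ = V₃V₂, V₃*V₃ = I_H, V₂ = V₂*V₃ and ‖V₂‖ ≤ 2, and moreover V₁*V₁ = I_H − (1/4)V₂*V₂. -/

import Mathlib

open ContinuousLinearMap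

/-- The restriction of a pentablock unitary `(N₁, N₂, N₃)` to a joint invariant closed
subspace `H` is a pentablock isometry: `(V₂, V₃)` is a Γ-isometry and
`V₁*V₁ = I - ¼ V₂*V₂`. -/
theorem statement3 {K : Type*} [NormedAddCommGroup K] [InnerProductSpace ℂ K]
    [CompleteSpace K] (N₁ N₂ N₃ : K →L[ℂ] K)
    (h₁₂ : N₁ * N₂ = N₂ * N₁) (h₁₃ : N₁ * N₃ = N₃ * N₁) (h₂₃ : N₂ * N₃ = N₃ * N₂)
    (hn₁ : N₁ * adjoint N₁ = adjoint N₁ * N₁)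
    (hn₂ : N₂ * adjoint N₂ = adjoint N₂ * N₂)
    (hn₃ : N₃ * adjoint N₃ = adjoint N₃ * N₃)
    (hu : adjoint N₃ * N₃ = 1 ∧ N₃ * adjoint N₃ = 1)
    (hΓ : N₂ = adjoint N₂ * N₃) (hb : ‖N₂‖ ≤ 2)
    (hpu : adjoint N₁ * N₁ = 1 - (1/4 : ℂ) • (adjoint N₂ * N₂))
    (H : Submodule ℂ K) [CompleteSpace H]
    (hinv : ∀ x ∈ H, N₁ x ∈ H ∧ N₂ x ∈ H ∧ N₃ x ∈ H)
    (V₁ V₂ V₃ : H →L[ℂ] H)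
    (hV : ∀ x : H, (V₁ x : K) = N₁ x ∧ (V₂ x : K) = N₂ x ∧ (V₃ x : K) = N₃ x) :
    V₂ * V₃ = V₃ * V₂ ∧
    adjoint V₃ * V₃ = 1 ∧
    V₂ = adjoint V₂ * V₃ ∧
    ‖V₂‖ ≤ 2 ∧
    adjoint V₁ * V₁ = 1 - (1/4 : ℂ) • (adjoint V₂ * V₂) := by

  obtain ⟨hu1, hu2⟩ := hu
  have hV1 : ∀ x : H, (V₁ x : K) = N₁ x := fun x => (hV x).1
  have hV2 : ∀ x : H, (V₂ x : K) = N₂ x := fun x => (hV x).2.1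
  have hV3 : ∀ x : H, (V₃ x : K) = N₃ x := fun x => (hV x).2.2
  refine ⟨?_, ?_, ?_, ?_, ?_⟩
  · refine ContinuousLinearMap.ext fun x => ?_
    apply Subtype.coe_injective
    simp only [ContinuousLinearMap.mul_apply]
    rw [hV2, hV3, hV3, hV2]
    have := DFunLike.congr_fun h₂₃ (x : K)
    simpa using this
  · refine ContinuousLinearMap.ext fun x => ?_
    refine ext_inner_left ℂ fun v => ?_
    rw [ContinuousLinearMap.mul_apply, adjoint_inner_right, Submodule.coe_inner, hV3, hV3,
      ← adjoint_inner_right]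
    have := DFunLike.congr_fun hu1 (x : K)
    simp only [ContinuousLinearMap.mul_apply] at this
    rw [this]
    simp [Submodule.coe_inner]
  · refine ContinuousLinearMap.ext fun x => ?_
    refine ext_inner_left ℂ fun v => ?_
    rw [ContinuousLinearMap.mul_apply, adjoint_inner_right, Submodule.coe_inner, Submodule.coe_inner,
      hV3, hV2, hV2]
    have := DFunLike.congr_fun hΓ (x : K)
    simp only [ContinuousLinearMap.mul_apply] at this
    rw [← adjoint_inner_right, ← this]
  · refine opNorm_le_bound _ (by norm_num) fun x => ?_
    have h1 : ‖V₂ x‖ = ‖(V₂ x : K)‖ := rfl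
    have h2 : ‖x‖ = ‖(x : K)‖ := rfl
    rw [h1, h2, hV2]
    calc ‖N₂ (x : K)‖ ≤ ‖N₂‖ * ‖(x : K)‖ := le_opNorm _ _
    _ ≤ 2 * ‖(x : K)‖ := by
        apply mul_le_mul_of_nonneg_right hb (norm_nonneg _)
  · refine ContinuousLinearMap.ext fun x => ?_
    refine ext_inner_left ℂ fun v => ?_
    rw [ContinuousLinearMap.mul_apply, adjoint_inner_right, Submodule.coe_inner, hV1, hV1,
      ← adjoint_inner_right]
    have := DFunLike.congr_fun hpu (x : K)
    simp only [ContinuousLinearMap.mul_apply] at this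
    rw [this]
    simp only [sub_apply, smul_apply, ContinuousLinearMap.one_apply, ContinuousLinearMap.mul_apply, inner_sub_right,
      inner_smul_right, adjoint_inner_right, Submodule.coe_inner, hV2]
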